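/- Let X, Y be real symmetric n×n matrices with X positive definite and let ψ = ψ_{X,Y}. Then ψ satisfies the eigenvalue equation Ĥ_{XY} ψ = (ℏ Tr X) ψ, where Ĥ_{XY} = (−iℏ∇_x + Yx)² + X²x·x; explicitly, for every x ∈ ℝⁿ: −ℏ² Δψ(x) − 2iℏ (Yx)·∇ψ(x) − iℏ (Tr Y) ψ(x) + (|Yx|² + X²x·x) ψ(x) = ℏ (Tr X) ψ(x), where Δ is the Laplacian, ∇ the gradient, |Yx|² = (Yx)·(Yx), and X²x·x = Σ_{j,k}(X²)_{jk} x_j x_k. -/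

import Mathlib

open Matrix

/-- The generalized (centered) coherent state
`ψ_{X,Y}(x) = (det X/(πℏ)ⁿ)^{1/4} exp(−(1/2ℏ)(X+iY)x·x)`. -/
noncomputable def gaussianState (n : ℕ) (ℏ : ℝ) (X Y : Matrix (Fin n) (Fin n) ℝ)
    (x : Fin n → ℝ) : ℂ :=
  (((X.det / (Real.pi * ℏ) ^ n) ^ ((1 : ℝ) / 4) : ℝ) : ℂ) *
    Complex.exp (-(1 / (2 * (ℏ : ℂ))) *
      ∑ j, ∑ k, ((X j k : ℂ) + Complex.I * (Y j k : ℂ)) * (x j : ℂ) * (x k : ℂ))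

noncomputable section GaussAux
variable {n : ℕ} (ℏ : ℝ) (X Y : Matrix (Fin n) (Fin n) ℝ)

/-- The complex matrix `A = X + iY` entrywise. -/
def Ac (j k : Fin n) : ℂ := (X j k : ℂ) + Complex.I * (Y j k : ℂ)

/-- Coordinate projection followed by coercion to `ℂ`, as a CLM. -/
def projC (j : Fin n) : (Fin n → ℝ) →L[ℝ] ℂ :=
  Complex.ofRealCLM.comp (ContinuousLinearMap.proj j)

/-- Derivative of the quadratic form `x ↦ ∑ A jk x_j x_k`. -/
def DQ (x : Fin n → ℝ) : (Fin n → ℝ) →L[ℝ] ℂ :=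
  ∑ j, ∑ k, Ac X Y j k • (((x j : ℂ)) • projC k + ((x k : ℂ)) • projC j)

lemma hasFDerivAt_Q (x : Fin n → ℝ) :
    HasFDerivAt (fun x : Fin n → ℝ => ∑ j, ∑ k, Ac X Y j k * (x j : ℂ) * (x k : ℂ))
      (DQ X Y x) x := by
  unfold DQ
  apply HasFDerivAt.fun_sum; intro j _
  apply HasFDerivAt.fun_sum; intro k _
  have hj : HasFDerivAt (fun x : Fin n → ℝ => ((x j : ℂ))) (projC j) x :=
    (projC (n := n) j).hasFDerivAt
  have hk : HasFDerivAt (fun x : Fin n → ℝ => ((x k : ℂ))) (projC k) x :=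
    (projC (n := n) k).hasFDerivAt
  have := ((hj.fun_mul hk).const_mul (Ac X Y j k))
  convert this using 1
  ext y; ring
  ext y; ring

lemma hasFDerivAt_psi (x : Fin n → ℝ) :
    HasFDerivAt (gaussianState n ℏ X Y)
      ((gaussianState n ℏ X Y x * -(1 / (2 * (ℏ : ℂ)))) • DQ X Y x) x := by
  have hQ := hasFDerivAt_Q X Y x
  have h2 := (hQ.const_mul (-(1 / (2 * (ℏ : ℂ))))).cexp
  have h3 := h2.const_mul (((X.det / (Real.pi * ℏ) ^ n) ^ ((1 : ℝ) / 4) : ℝ) : ℂ)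
  refine h3.congr_fderiv ?_
  rw [smul_smul, smul_smul]
  congr 1

lemma DQ_apply (x v : Fin n → ℝ) :
    DQ X Y x v = ∑ a, ∑ b, Ac X Y a b * ((x a : ℂ) * (v b : ℂ) + (x b : ℂ) * (v a : ℂ)) := by
  simp [DQ, projC, smul_eq_mul, mul_add]

lemma DQ_single (hs : ∀ a b, Ac X Y a b = Ac X Y b a) (x : Fin n → ℝ) (j : Fin n) :
    DQ X Y x (Pi.single j 1) = 2 * ∑ k, Ac X Y j k * (x k : ℂ) := by
  rw [DQ_apply]
  have h1 : ∀ a : Fin n, ∑ b, Ac X Y a b *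
      ((x a : ℂ) * ((Pi.single j 1 : Fin n → ℝ) b : ℂ) +
        (x b : ℂ) * ((Pi.single j 1 : Fin n → ℝ) a : ℂ))
      = Ac X Y a j * (x a : ℂ) + (if a = j then ∑ b, Ac X Y a b * (x b : ℂ) else 0) := by
    intro a
    simp only [Pi.single_apply, mul_add, Finset.sum_add_distrib, apply_ite Complex.ofReal,
      Complex.ofReal_one, Complex.ofReal_zero, mul_ite, mul_one, mul_zero, ite_mul, zero_mul,
      Finset.sum_ite_eq', Finset.mem_univ, if_true]
    congr 1
    by_cases h : a = j <;> simp [h]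
  rw [Finset.sum_congr rfl fun a _ => h1 a, Finset.sum_add_distrib,
    Finset.sum_ite_eq' Finset.univ j, if_pos (Finset.mem_univ j), two_mul]
  congr 1
  exact Finset.sum_congr rfl fun a _ => by rw [hs a j, mul_comm]

lemma fderiv_psi_single (hℏ : ℏ ≠ 0) (hs : ∀ a b, Ac X Y a b = Ac X Y b a)
    (x : Fin n → ℝ) (j : Fin n) :
    fderiv ℝ (gaussianState n ℏ X Y) x (Pi.single j 1) =
      gaussianState n ℏ X Y x * (-(1 / (ℏ : ℂ)) * ∑ k, Ac X Y j k * (x k : ℂ)) := by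
  rw [(hasFDerivAt_psi ℏ X Y x).fderiv, ContinuousLinearMap.smul_apply,
    DQ_single X Y hs x j, smul_eq_mul]
  have hC : (ℏ : ℂ) ≠ 0 := Complex.ofReal_ne_zero.mpr hℏ
  field_simp

lemma fderiv2_psi_single (hℏ : ℏ ≠ 0) (hs : ∀ a b, Ac X Y a b = Ac X Y b a)
    (x : Fin n → ℝ) (j : Fin n) :
    fderiv ℝ (fun y => fderiv ℝ (gaussianState n ℏ X Y) y (Pi.single j 1)) x (Pi.single j 1) =
      gaussianState n ℏ X Y x *
        ((-(1 / (ℏ : ℂ)) * ∑ k, Ac X Y j k * (x k : ℂ)) ^ 2 + -(1 / (ℏ : ℂ)) * Ac X Y j j) := by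
  have hfun : (fun y => fderiv ℝ (gaussianState n ℏ X Y) y (Pi.single j 1)) =
      fun y => gaussianState n ℏ X Y y * (-(1 / (ℏ : ℂ)) * ∑ k, Ac X Y j k * (y k : ℂ)) :=
    funext fun y => fderiv_psi_single ℏ X Y hℏ hs y j
  rw [hfun]
  have hd0 : HasFDerivAt (fun y : Fin n → ℝ => ∑ k, Ac X Y j k * (y k : ℂ))
      (∑ k, Ac X Y j k • projC k) x :=
    HasFDerivAt.fun_sum fun k _ => ((projC (n := n) k).hasFDerivAt.const_mul (Ac X Y j k))
  have hd := hd0.const_mul (-(1 / (ℏ : ℂ)))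
  have hψ := hasFDerivAt_psi ℏ X Y x
  have hprod := (hψ.fun_mul hd).fderiv
  rw [hprod]
  simp only [ContinuousLinearMap.add_apply, ContinuousLinearMap.smul_apply, smul_eq_mul]
  rw [DQ_single X Y hs x j]
  have hMj : (∑ k, Ac X Y j k • projC (n := n) k) (Pi.single j 1) = Ac X Y j j := by
    simp [projC, Pi.single_apply, apply_ite Complex.ofReal, mul_ite,
      Finset.sum_ite_eq', smul_eq_mul]
  rw [hMj]
  have hC : (ℏ : ℂ) ≠ 0 := Complex.ofReal_ne_zero.mpr hℏ
  field_simp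
  ring

lemma sum_Ac_mulVec (x : Fin n → ℝ) (j : Fin n) :
    ∑ k, Ac X Y j k * (x k : ℂ) =
      ((X.mulVec x j : ℝ) : ℂ) + Complex.I * ((Y.mulVec x j : ℝ) : ℂ) := by
  simp only [Ac, Matrix.mulVec, dotProduct]
  push_cast
  rw [Finset.mul_sum, ← Finset.sum_add_distrib]
  exact Finset.sum_congr rfl fun k _ => by ring

lemma sum_Ac_diag : ∑ j, Ac X Y j j = (X.trace : ℂ) + Complex.I * (Y.trace : ℂ) := by
  simp only [Ac, Matrix.trace, Matrix.diag]
  push_cast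
  rw [Finset.mul_sum, ← Finset.sum_add_distrib]

lemma dot_vv (x : Fin n → ℝ) :
    ((Y.mulVec x ⬝ᵥ Y.mulVec x : ℝ) : ℂ) = ∑ j, ((Y.mulVec x j : ℝ) : ℂ) ^ 2 := by
  simp only [dotProduct]
  push_cast
  exact Finset.sum_congr rfl fun j _ => (sq _).symm

lemma dot_xx (hX : X.IsSymm) (x : Fin n → ℝ) :
    ((x ⬝ᵥ (X * X).mulVec x : ℝ) : ℂ) = ∑ j, ((X.mulVec x j : ℝ) : ℂ) ^ 2 := by
  have hreal : x ⬝ᵥ (X * X).mulVec x = X.mulVec x ⬝ᵥ X.mulVec x := by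
    rw [← Matrix.mulVec_mulVec, Matrix.dotProduct_mulVec]
    congr 1
    rw [← hX.eq, Matrix.vecMul_transpose, hX.eq]
  rw [hreal]
  simp only [dotProduct]
  push_cast
  exact Finset.sum_congr rfl fun j _ => (sq _).symm

lemma key_scalar (hℏ : ℏ ≠ 0) (x : Fin n → ℝ) :
    -(ℏ : ℂ) ^ 2 * (∑ j, ((-(1 / (ℏ : ℂ)) * (((X.mulVec x j : ℝ) : ℂ) +
          Complex.I * ((Y.mulVec x j : ℝ) : ℂ))) ^ 2 + -(1 / (ℏ : ℂ)) * Ac X Y j j)) -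
      2 * Complex.I * (ℏ : ℂ) * (∑ j, ((Y.mulVec x j : ℝ) : ℂ) *
          (-(1 / (ℏ : ℂ)) * (((X.mulVec x j : ℝ) : ℂ) + Complex.I * ((Y.mulVec x j : ℝ) : ℂ)))) =
      -(∑ j, ((X.mulVec x j : ℝ) : ℂ) ^ 2) - (∑ j, ((Y.mulVec x j : ℝ) : ℂ) ^ 2) +
        (ℏ : ℂ) * ((X.trace : ℂ) + Complex.I * (Y.trace : ℂ)) := by
  have hC : (ℏ : ℂ) ≠ 0 := Complex.ofReal_ne_zero.mpr hℏ
  rw [Finset.mul_sum, Finset.mul_sum, ← Finset.sum_sub_distrib, ← sum_Ac_diag X Y,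
    Finset.mul_sum]
  simp only [← Finset.sum_neg_distrib, ← Finset.sum_sub_distrib, ← Finset.sum_add_distrib]
  refine Finset.sum_congr rfl fun j _ => ?_
  field_simp
  linear_combination ((Y.mulVec x j : ℝ) : ℂ) ^ 2 * Complex.I_sq

end GaussAux

/-- `ψ_{X,Y}` satisfies the eigenvalue equation `Ĥ_{XY} ψ = (ℏ Tr X) ψ` where
`Ĥ_{XY} = (−iℏ∇_x + Yx)² + X²x·x`; written out with partial derivatives:
`−ℏ² Δψ − 2iℏ (Yx)·∇ψ − iℏ (Tr Y) ψ + (|Yx|² + X²x·x) ψ = ℏ (Tr X) ψ`. -/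
theorem gaussian_fermi_eigenvalue_equation
    (n : ℕ) (hn : 1 ≤ n) (ℏ : ℝ) (hℏ : 0 < ℏ)
    (X Y : Matrix (Fin n) (Fin n) ℝ)
    (hX : X.IsSymm) (hY : Y.IsSymm) (hXpd : X.PosDef) :
    ∀ x : Fin n → ℝ,
      -(ℏ : ℂ) ^ 2 *
          (∑ j, fderiv ℝ (fun y => fderiv ℝ (gaussianState n ℏ X Y) y (Pi.single j 1)) x
            (Pi.single j 1)) -
        2 * Complex.I * (ℏ : ℂ) *
          (∑ j, (Y.mulVec x j : ℂ) * fderiv ℝ (gaussianState n ℏ X Y) x (Pi.single j 1)) -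
        Complex.I * (ℏ : ℂ) * (Y.trace : ℂ) * gaussianState n ℏ X Y x +
        (((Y.mulVec x ⬝ᵥ Y.mulVec x : ℝ) : ℂ) + ((x ⬝ᵥ (X * X).mulVec x : ℝ) : ℂ)) *
          gaussianState n ℏ X Y x =
      ((ℏ : ℂ) * (X.trace : ℂ)) * gaussianState n ℏ X Y x := by
  intro x
  have hℏ' : ℏ ≠ 0 := ne_of_gt hℏ
  have hs : ∀ a b, Ac X Y a b = Ac X Y b a := by
    intro a b
    simp only [Ac]
    rw [hX.apply a b, hY.apply a b]
  simp only [fderiv2_psi_single ℏ X Y hℏ' hs x, fderiv_psi_single ℏ X Y hℏ' hs x,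
    sum_Ac_mulVec X Y x]
  rw [dot_vv Y x, dot_xx X hX x]
  have h2 : ∀ j : Fin n, (Y.mulVec x j : ℂ) * (gaussianState n ℏ X Y x *
      (-(1 / (ℏ : ℂ)) * (((X.mulVec x j : ℝ) : ℂ) + Complex.I * ((Y.mulVec x j : ℝ) : ℂ)))) =
      gaussianState n ℏ X Y x * (((Y.mulVec x j : ℝ) : ℂ) *
      (-(1 / (ℏ : ℂ)) * (((X.mulVec x j : ℝ) : ℂ) + Complex.I * ((Y.mulVec x j : ℝ) : ℂ)))) :=
    fun j => by ring
  simp only [h2]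
  rw [← Finset.mul_sum, ← Finset.mul_sum]
  linear_combination gaussianState n ℏ X Y x * key_scalar ℏ X Y hℏ' x
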